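/- Let v = (-1, 1, 1)ᵀ ∈ ℝ³ and let M be the 3×3 real matrix with rows (1, 0, 1), (1, 1, 0), (0, 0, 1). For every real c > 0, the set function g(S) = (dist(v, Range M(S)))^c on subsets S ⊆ {1,2,3} is not supermodular: g({1,2}) − g({1,2,3}) > g({1}) − g({1,3}). -/

import Mathlib

/-- The column of the matrix `M` with index `j`, viewed as a vector in
Euclidean space (so that distances are Euclidean `ℓ²` distances). -/
noncomputable def col (M : Matrix (Fin 3) (Fin 3) ℝ) (j : Fin 3) :
    EuclideanSpace ℝ (Fin 3) :=
  (WithLp.equiv 2 (Fin 3 → ℝ)).symm fun i => M i j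

/-- `Range M(S)`: the span of the columns of `M` with index in `S`. -/
noncomputable def colSpan (M : Matrix (Fin 3) (Fin 3) ℝ) (S : Set (Fin 3)) :
    Submodule ℝ (EuclideanSpace ℝ (Fin 3)) :=
  Submodule.span ℝ (col M '' S)

/-- `g(S) = dist(v, Range M(S))^c` where `c` is a positive real exponent. -/
noncomputable def distPow (c : ℝ) (v : EuclideanSpace ℝ (Fin 3))
    (M : Matrix (Fin 3) (Fin 3) ℝ) (S : Set (Fin 3)) : ℝ :=
  (Metric.infDist v (colSpan M S : Set (EuclideanSpace ℝ (Fin 3)))) ^ c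

section aux
open RealInnerProductSpace

lemma aux_infDist_eq_norm_sub (K : Submodule ℝ (EuclideanSpace ℝ (Fin 3)))
    (v w : EuclideanSpace ℝ (Fin 3))
    (hw : w ∈ K) (h : ∀ x ∈ K, ⟪v - w, x⟫ = 0) :
    Metric.infDist v (K : Set (EuclideanSpace ℝ (Fin 3))) = ‖v - w‖ := by
  rw [Metric.infDist_eq_iInf]
  rw [(Submodule.norm_eq_iInf_iff_real_inner_eq_zero K hw).2 h]
  exact iInf_congr fun y => dist_eq_norm _ _

lemma aux_orth_span (s : Set (EuclideanSpace ℝ (Fin 3))) (u : EuclideanSpace ℝ (Fin 3))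
    (h : ∀ x ∈ s, ⟪u, x⟫ = 0) : ∀ x ∈ Submodule.span ℝ s, ⟪u, x⟫ = 0 := by
  intro x hx
  induction hx using Submodule.span_induction with
  | mem x hx => exact h x hx
  | zero => simp
  | add a b _ _ ha hb => rw [inner_add_right, ha, hb]; ring
  | smul r a _ ha => rw [real_inner_smul_right, ha]; ring

noncomputable abbrev auxEE (a b c : ℝ) : EuclideanSpace ℝ (Fin 3) :=
  (WithLp.equiv 2 (Fin 3 → ℝ)).symm ![a, b, c]

lemma aux_col0 : col !![1, 0, 1; 1, 1, 0; 0, 0, 1] 0 = auxEE 1 1 0 := by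
  ext i; fin_cases i <;> simp [col]
lemma aux_col1 : col !![1, 0, 1; 1, 1, 0; 0, 0, 1] 1 = auxEE 0 1 0 := by
  ext i; fin_cases i <;> simp [col]
lemma aux_col2 : col !![1, 0, 1; 1, 1, 0; 0, 0, 1] 2 = auxEE 1 0 1 := by
  ext i; fin_cases i <;> simp [col]

lemma aux_dist01 :
    Metric.infDist (auxEE (-1) 1 1)
      (colSpan !![1, 0, 1; 1, 1, 0; 0, 0, 1] {0, 1} : Set (EuclideanSpace ℝ (Fin 3))) = 1 := by
  have himg : col !![1, 0, 1; 1, 1, 0; 0, 0, 1] '' {0, 1}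
      = {auxEE 1 1 0, auxEE 0 1 0} := by
    rw [Set.image_pair, aux_col0, aux_col1]
  have hw : auxEE (-1) 1 0 ∈ colSpan !![1, 0, 1; 1, 1, 0; 0, 0, 1] {0, 1} := by
    rw [colSpan, himg]
    have : auxEE (-1) 1 0 = (-1 : ℝ) • auxEE 1 1 0 + (2:ℝ) • auxEE 0 1 0 := by
      ext i; fin_cases i <;> (simp; try norm_num)
    rw [this]
    exact Submodule.add_mem _
      (Submodule.smul_mem _ _ (Submodule.subset_span (by simp)))
      (Submodule.smul_mem _ _ (Submodule.subset_span (by simp)))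
  have hsub : auxEE (-1) 1 1 - auxEE (-1) 1 0 = auxEE 0 0 1 := by
    ext i; fin_cases i <;> (simp; try norm_num)
  have horth : ∀ x ∈ colSpan !![1, 0, 1; 1, 1, 0; 0, 0, 1] {0, 1},
      ⟪auxEE (-1) 1 1 - auxEE (-1) 1 0, x⟫ = 0 := by
    rw [colSpan, himg, hsub]
    apply aux_orth_span
    rintro x (rfl | rfl) <;> simp [PiLp.inner_apply, Fin.sum_univ_three]
  rw [aux_infDist_eq_norm_sub _ _ _ hw horth, hsub]
  simp [EuclideanSpace.norm_eq, Fin.sum_univ_three]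

lemma aux_dist012 :
    Metric.infDist (auxEE (-1) 1 1)
      (colSpan !![1, 0, 1; 1, 1, 0; 0, 0, 1] {0, 1, 2} : Set (EuclideanSpace ℝ (Fin 3))) = 0 := by
  apply Metric.infDist_zero_of_mem
  have himg : col !![1, 0, 1; 1, 1, 0; 0, 0, 1] '' {0, 1, 2}
      = {auxEE 1 1 0, auxEE 0 1 0, auxEE 1 0 1} := by
    rw [show ({0,1,2} : Set (Fin 3)) = insert 0 {1,2} from rfl, Set.image_insert_eq,
      Set.image_pair, aux_col0, aux_col1, aux_col2]
  have hmem : auxEE (-1) 1 1 ∈ colSpan !![1, 0, 1; 1, 1, 0; 0, 0, 1] {0, 1, 2} := by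
    rw [colSpan, himg]
    have : auxEE (-1) 1 1 = (-2 : ℝ) • auxEE 1 1 0 + (3:ℝ) • auxEE 0 1 0 + (1:ℝ) • auxEE 1 0 1 := by
      ext i; fin_cases i <;> (simp; try norm_num)
    rw [this]
    exact Submodule.add_mem _
      (Submodule.add_mem _
        (Submodule.smul_mem _ _ (Submodule.subset_span (by simp)))
        (Submodule.smul_mem _ _ (Submodule.subset_span (by simp))))
      (Submodule.smul_mem _ _ (Submodule.subset_span (by simp)))
  exact hmem

lemma aux_dist0 :
    Metric.infDist (auxEE (-1) 1 1)
      (colSpan !![1, 0, 1; 1, 1, 0; 0, 0, 1] {0} : Set (EuclideanSpace ℝ (Fin 3)))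
      = ‖auxEE (-1) 1 1‖ := by
  have himg : col !![1, 0, 1; 1, 1, 0; 0, 0, 1] '' {0} = {auxEE 1 1 0} := by
    rw [Set.image_singleton, aux_col0]
  have horth : ∀ x ∈ colSpan !![1, 0, 1; 1, 1, 0; 0, 0, 1] {0},
      ⟪auxEE (-1) 1 1 - 0, x⟫ = 0 := by
    rw [colSpan, himg, sub_zero]
    apply aux_orth_span
    rintro x rfl; simp [PiLp.inner_apply, Fin.sum_univ_three]
  rw [aux_infDist_eq_norm_sub _ _ 0 (Submodule.zero_mem _) horth, sub_zero]

lemma aux_dist02 :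
    Metric.infDist (auxEE (-1) 1 1)
      (colSpan !![1, 0, 1; 1, 1, 0; 0, 0, 1] {0, 2} : Set (EuclideanSpace ℝ (Fin 3)))
      = ‖auxEE (-1) 1 1‖ := by
  have himg : col !![1, 0, 1; 1, 1, 0; 0, 0, 1] '' {0, 2}
      = {auxEE 1 1 0, auxEE 1 0 1} := by
    rw [Set.image_pair, aux_col0, aux_col2]
  have horth : ∀ x ∈ colSpan !![1, 0, 1; 1, 1, 0; 0, 0, 1] {0, 2},
      ⟪auxEE (-1) 1 1 - 0, x⟫ = 0 := by
    rw [colSpan, himg, sub_zero]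
    apply aux_orth_span
    rintro x (rfl | rfl) <;> simp [PiLp.inner_apply, Fin.sum_univ_three]
  rw [aux_infDist_eq_norm_sub _ _ 0 (Submodule.zero_mem _) horth, sub_zero]

end aux

theorem distPow_not_supermodular :
    ∀ c : ℝ, 0 < c →
      distPow c ((WithLp.equiv 2 (Fin 3 → ℝ)).symm ![-1, 1, 1]) !![1, 0, 1; 1, 1, 0; 0, 0, 1] {0, 1}
          - distPow c ((WithLp.equiv 2 (Fin 3 → ℝ)).symm ![-1, 1, 1]) !![1, 0, 1; 1, 1, 0; 0, 0, 1] {0, 1, 2}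
        > distPow c ((WithLp.equiv 2 (Fin 3 → ℝ)).symm ![-1, 1, 1]) !![1, 0, 1; 1, 1, 0; 0, 0, 1] {0}
          - distPow c ((WithLp.equiv 2 (Fin 3 → ℝ)).symm ![-1, 1, 1]) !![1, 0, 1; 1, 1, 0; 0, 0, 1] {0, 2} := by
  intro c hc
  have hv : ((WithLp.equiv 2 (Fin 3 → ℝ)).symm ![-1, 1, 1] : EuclideanSpace ℝ (Fin 3))
      = auxEE (-1) 1 1 := rfl
  unfold distPow
  rw [hv, aux_dist01, aux_dist012, aux_dist0, aux_dist02, sub_self,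
    Real.one_rpow, Real.zero_rpow hc.ne']
  norm_num
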